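/- Let a, m, b > 0 with a/m > 4b + 1/b and let (U_2, V_2) be the vegetated steady state with V_2 > 1/(2b). Then the Jacobian M = [[−1−V_2², −2U_2V_2],[(1−bV_2)V_2², −m + (2−3bV_2)U_2V_2]] satisfies det M > 0 and trace M < 0; hence (U_2,V_2) is linearly stable against homogeneous perturbations. -/

import Mathlib

lemma quad_root_neg (t d : ℝ) (ht : t < 0) (hd : 0 < d) (μ : ℂ)
    (h : μ ^ 2 - (t : ℂ) * μ + (d : ℂ) = 0) : μ.re < 0 := by
  have hre : μ.re ^ 2 - μ.im ^ 2 - t * μ.re + d = 0 := by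
    have := congrArg Complex.re h
    simp [pow_two, Complex.mul_re, Complex.mul_im] at this
    nlinarith [this]
  have him : μ.im * (2 * μ.re - t) = 0 := by
    have := congrArg Complex.im h
    simp [pow_two, Complex.mul_re, Complex.mul_im] at this
    nlinarith [this]
  rcases mul_eq_zero.1 him with h0 | h0
  · by_contra hx
    push_neg at hx
    nlinarith
  · linarith

lemma eig_neg (M : Matrix (Fin 2) (Fin 2) ℝ) (hd : 0 < M.det) (ht : M.trace < 0)
    (μ : ℂ) (hμ : μ ∈ spectrum ℂ (M.map Complex.ofReal)) : μ.re < 0 := by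
  rw [spectrum.mem_iff] at hμ
  have hdet0 : (algebraMap ℂ (Matrix (Fin 2) (Fin 2) ℂ) μ - M.map Complex.ofReal).det = 0 := by
    by_contra h0
    exact hμ ((Matrix.isUnit_iff_isUnit_det _).2 (isUnit_iff_ne_zero.2 h0))
  rw [Matrix.det_fin_two] at hdet0
  simp only [Matrix.sub_apply, Matrix.map_apply, Matrix.algebraMap_matrix_apply] at hdet0
  rw [Matrix.det_fin_two] at hd
  rw [Matrix.trace_fin_two] at ht
  apply quad_root_neg (M 0 0 + M 1 1) (M 0 0 * M 1 1 - M 0 1 * M 1 0) ht hd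
  simp only [if_pos rfl, if_neg (by decide : ¬(0:Fin 2) = 1), if_neg (by decide : ¬(1:Fin 2) = 0), if_true, Algebra.algebraMap_self_apply] at hdet0
  push_cast
  linear_combination hdet0

set_option maxHeartbeats 1000000 in
/-- For `a/m > 4b + 1/b`, the vegetated steady state `(U₂,V₂)` has `V₂ > 1/(2b)`,
and its Jacobian `M` satisfies `det M > 0` and `trace M < 0`; hence all (complex)
eigenvalues of `M` have negative real part, i.e. `(U₂,V₂)` is linearly stable
against homogeneous perturbations. -/
theorem stmt_16 (a m b : ℝ) (ha : 0 < a) (hm : 0 < m) (hb : 0 < b)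
    (h : 4 * b + 1 / b < a / m) :
    let V2 : ℝ := (a / m + Real.sqrt ((a / m) ^ 2 - 4 * (1 + (a / m) * b))) /
      (2 * (1 + (a / m) * b))
    let U2 : ℝ := m * (a / m - V2 / (1 - b * V2))
    let M : Matrix (Fin 2) (Fin 2) ℝ :=
      !![-1 - V2 ^ 2, -2 * U2 * V2;
         (1 - b * V2) * V2 ^ 2, -m + (2 - 3 * b * V2) * U2 * V2]
    1 / (2 * b) < V2 ∧ 0 < M.det ∧ M.trace < 0 ∧
      ∀ μ : ℂ, μ ∈ spectrum ℂ (M.map (Complex.ofReal)) → μ.re < 0 := by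
  intro V2 U2 M
  have hV2 : V2 = (a / m + Real.sqrt ((a / m) ^ 2 - 4 * (1 + (a / m) * b))) /
      (2 * (1 + (a / m) * b)) := rfl
  have hU2 : U2 = m * (a / m - V2 / (1 - b * V2)) := rfl
  have hdetM : M.det = (-1 - V2 ^ 2) * (-m + (2 - 3 * b * V2) * U2 * V2)
      - (-2 * U2 * V2) * ((1 - b * V2) * V2 ^ 2) := by
    rw [show M = !![-1 - V2 ^ 2, -2 * U2 * V2;
         (1 - b * V2) * V2 ^ 2, -m + (2 - 3 * b * V2) * U2 * V2] from rfl,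
      Matrix.det_fin_two_of]
  have htrM : M.trace = (-1 - V2 ^ 2) + (-m + (2 - 3 * b * V2) * U2 * V2) := by
    rw [show M = !![-1 - V2 ^ 2, -2 * U2 * V2;
         (1 - b * V2) * V2 ^ 2, -m + (2 - 3 * b * V2) * U2 * V2] from rfl,
      Matrix.trace_fin_two_of]
  clear_value M U2 V2
  obtain ⟨c, hc_def⟩ : ∃ c : ℝ, a / m = c := ⟨_, rfl⟩
  rw [hc_def] at h hV2 hU2
  have hcpos : 0 < c := hc_def ▸ div_pos ha hm
  have hbc : 4 * b ^ 2 + 1 < b * c := by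
    have h2 := mul_lt_mul_of_pos_left h hb
    have h3 : b * (4 * b + 1 / b) = 4 * b ^ 2 + 1 := by field_simp
    linarith [h3 ▸ h2]
  have hk : (0:ℝ) < 1 + c * b := by nlinarith
  have key : 1 < b ^ 2 * (c ^ 2 - 4 * (1 + c * b)) := by
    nlinarith [mul_pos (sub_pos.mpr hbc) (show (0:ℝ) < b * c + 1 by nlinarith)]
  have hD : 0 < c ^ 2 - 4 * (1 + c * b) := by nlinarith [sq_nonneg b]
  obtain ⟨s, hs_def⟩ : ∃ s : ℝ, Real.sqrt (c ^ 2 - 4 * (1 + c * b)) = s := ⟨_, rfl⟩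
  rw [hs_def] at hV2
  have hs2 : s ^ 2 = c ^ 2 - 4 * (1 + c * b) := by rw [← hs_def]; exact Real.sq_sqrt hD.le
  have hs0 : 0 ≤ s := hs_def ▸ Real.sqrt_nonneg _
  have key2 : 1 < (b * s) ^ 2 := by rw [mul_pow, hs2]; exact key
  have hbs : 1 < b * s := by nlinarith [mul_nonneg hb.le hs0]
  have hsc : s < c := by nlinarith
  have hV2pos : 0 < V2 := by rw [hV2]; positivity
  have hquad : (1 + c * b) * V2 ^ 2 - c * V2 + 1 = 0 := by
    rw [hV2]; field_simp
    linear_combination hs2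
  have hbV : 1 / 2 < b * V2 := by
    rw [hV2, show b * ((c + s) / (2 * (1 + c * b))) = (b * (c + s)) / (2 * (1 + c * b)) by ring,
      lt_div_iff₀ (by positivity)]
    nlinarith
  have hbV1 : b * V2 < 1 := by
    rw [hV2, show b * ((c + s) / (2 * (1 + c * b))) = (b * (c + s)) / (2 * (1 + c * b)) by ring,
      div_lt_iff₀ (by positivity)]
    nlinarith [mul_lt_mul_of_pos_left hsc hb]
  have hw : 0 < 1 - b * V2 := by linarith
  have hcv : c * V2 * (1 - b * V2) = 1 + V2 ^ 2 := by nlinarith [hquad]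
  have hUVw : U2 * V2 * (1 - b * V2) = m := by
    rw [hU2]
    have hdc : V2 / (1 - b * V2) * (1 - b * V2) = V2 := div_mul_cancel₀ _ hw.ne'
    linear_combination m * hcv - m * V2 * hdc
  have hdet : M.det = m * (2 * b * V2 - 1 + V2 ^ 2) / (1 - b * V2) := by
    rw [hdetM, eq_div_iff hw.ne']
    linear_combination ((-1 - V2 ^ 2) * (2 - 3 * b * V2) + 2 * (1 - b * V2) * V2 ^ 2) * hUVw
  have htr : M.trace = -1 - V2 ^ 2 + m * (1 - 2 * b * V2) / (1 - b * V2) := by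
    rw [htrM]
    have h22 : -m + (2 - 3 * b * V2) * U2 * V2 = m * (1 - 2 * b * V2) / (1 - b * V2) := by
      rw [eq_div_iff hw.ne']
      linear_combination (2 - 3 * b * V2) * hUVw
    rw [h22]
  have hdetpos : 0 < M.det := by
    rw [hdet]
    have hnum : 0 < m * (2 * b * V2 - 1 + V2 ^ 2) := by nlinarith
    positivity
  have htrneg : M.trace < 0 := by
    rw [htr]
    have hneg : m * (1 - 2 * b * V2) / (1 - b * V2) < 0 := by
      apply div_neg_of_neg_of_pos _ hw
      nlinarith
    nlinarith
  refine ⟨?_, hdetpos, htrneg, ?_⟩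
  · rw [div_lt_iff₀ (by positivity)]
    nlinarith
  · intro μ hμ
    exact eig_neg M hdetpos htrneg μ hμ
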